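/- Let V be a real inner product space, B a finite linearly independent set of nonzero vectors of V, and w ∈ V. Then the set of functions n : B → ℕ such that ⟪β, w − Σ_{α∈B} n(α)·α^∨⟫ ≥ 0 for all β ∈ B is finite. (This is the combinatorial content of the finiteness assertion of the paper's Lemma 'Z_z^+(V,V') is finite': for z ∈ Z the set Z⁺ ∩ z·∏_{α∈Δ} a_α^ℕ is finite.) -/

import Mathlib

open scoped RealInnerProductSpace

set_option maxHeartbeats 1000000
set_option synthInstance.maxHeartbeats 100000

/-- Combinatorial content of the finiteness of `Z_z^+(V,V')`: for a finite linearly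
independent set `B` of nonzero vectors and `w ∈ V`, the set of `n : B → ℕ` such that
`w - ∑ n(α) • α^∨` is `B`-dominant is finite. -/
theorem finite_dominant_shifts
    {V : Type*} [NormedAddCommGroup V] [InnerProductSpace ℝ V]
    (B : Finset V)
    (hB : LinearIndependent ℝ (Subtype.val : ↥(B : Set V) → V))
    (h0 : ∀ α ∈ B, α ≠ (0 : V)) (w : V) :
    {n : B → ℕ | ∀ β ∈ B,
      0 ≤ ⟪β, (w - ∑ α ∈ B.attach, (n α : ℝ) •
        ((2 / ⟪(α : V), (α : V)⟫) • (α : V)))⟫}.Finite := by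
  classical
  have hip : ∀ α : B, (0:ℝ) < ⟪(α:V),(α:V)⟫ := fun α =>
    lt_of_le_of_ne real_inner_self_nonneg
      (Ne.symm (inner_self_ne_zero.2 (h0 α α.2)))
  have hpos : ∀ α : B, (0:ℝ) < 2 / ⟪(α:V),(α:V)⟫ := fun α =>
    div_pos two_pos (hip α)
  set c : B → V := fun α => (2 / ⟪(α:V),(α:V)⟫) • (α:V) with hc_def
  have hcLI : LinearIndependent ℝ c := by
    have := hB.units_smul (fun α : B => Units.mk0 _ (hpos α).ne')
    convert this using 1
    · rfl
    · rfl
  -- basis of the span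
  haveI : FiniteDimensional ℝ (Submodule.span ℝ (Set.range c)) :=
    FiniteDimensional.span_of_finite ℝ (Set.finite_range c)
  let b : Module.Basis B ℝ (Submodule.span ℝ (Set.range c)) := Module.Basis.span hcLI
  let g : B → (Submodule.span ℝ (Set.range c) →L[ℝ] ℝ) := fun α =>
    LinearMap.toContinuousLinearMap (b.coord α)
  set M : B → ℕ := fun α => ⌈‖g α‖ * ‖w‖⌉₊ with hM
  apply Set.Finite.subset (Set.finite_Icc (fun _ : B => 0) M)
  intro n hn
  -- the vector in the span
  set x : Submodule.span ℝ (Set.range c) := ∑ α : B, (n α : ℝ) •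
    (⟨c α, Submodule.subset_span (Set.mem_range_self α)⟩ :
      Submodule.span ℝ (Set.range c)) with hx
  have hxb : x = ∑ α : B, (n α : ℝ) • b α := by
    refine Finset.sum_congr rfl fun α _ => ?_
    congr 1
    exact (Module.Basis.span_apply hcLI α).symm
  have hxcoe : (x : V) = ∑ α ∈ B.attach, (n α : ℝ) • c α := by
    rw [hx]
    push_cast [Submodule.coe_sum]
    rw [← Finset.univ_eq_attach]
  set v : V := ∑ α ∈ B.attach, (n α : ℝ) • c α with hv
  -- key inequality : ‖v‖ ≤ ‖w‖
  have hdom : ∀ β ∈ B, (0:ℝ) ≤ ⟪β, w - v⟫ := hn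
  have hvwv : (0:ℝ) ≤ ⟪v, w - v⟫ := by
    rw [hv, sum_inner]
    refine Finset.sum_nonneg fun α _ => ?_
    rw [real_inner_smul_left, hc_def]
    simp only [real_inner_smul_left]
    exact mul_nonneg (Nat.cast_nonneg _)
      (mul_nonneg (hpos α).le (hdom α α.2))
  have hcs : ⟪v, w⟫ ≤ ‖v‖ * ‖w‖ := real_inner_le_norm v w
  have hnv : ‖v‖ ≤ ‖w‖ := by
    have h1 : ⟪v, v⟫ ≤ ⟪v, w⟫ := by
      have := hvwv
      rw [inner_sub_right] at this
      linarith
    have h2 : ⟪v, v⟫ = ‖v‖ * ‖v‖ := real_inner_self_eq_norm_mul_norm v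
    nlinarith [norm_nonneg v, norm_nonneg w]
  -- coordinate bound
  constructor
  · intro α; exact Nat.zero_le _
  intro α
  have hrep : (b.repr x) α = (n α : ℝ) := by
    rw [hxb]
    simp [Finsupp.single_apply]
  have hb1 : |(b.coord α) x| ≤ ‖g α‖ * ‖x‖ := by
    have := (g α).le_opNorm x
    rwa [Real.norm_eq_abs] at this
  have hxnorm : ‖x‖ ≤ ‖w‖ := by
    rw [show ‖x‖ = ‖(x : V)‖ from rfl, hxcoe]
    exact hnv
  have : (n α : ℝ) ≤ ‖g α‖ * ‖w‖ := by
    have habs : |(n α : ℝ)| ≤ ‖g α‖ * ‖x‖ := by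
      rw [← hrep]
      exact hb1
    have : (n α : ℝ) ≤ ‖g α‖ * ‖x‖ := (le_abs_self _).trans habs
    calc (n α : ℝ) ≤ ‖g α‖ * ‖x‖ := this
      _ ≤ ‖g α‖ * ‖w‖ := by
        exact mul_le_mul_of_nonneg_left hxnorm ((g α).opNorm_nonneg)
  calc n α ≤ ⌈‖g α‖ * ‖w‖⌉₊ := by
        exact_mod_cast this.trans (Nat.le_ceil _)
    _ = M α := rfl
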